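/- arXiv:0805.4665 — 2 statements merged into one kernel-verified Lean document; each statement's English description precedes it below -/
import Mathlib

section
/- If (P,Q) ∈ R, (P',Q') ∈ R, P ⪯ P', and there exist contexts φ and ψ such that for all (A,B) ∈ R we have B ⪯ φ[A], A ⪯ ψ[B], and φ[ψ[B]] ⪯ B, then Q ⪯ Q'. (Proof of security via cancelling contexts.) -/
/-- Proof of security via cancelling contexts. -/
theorem security_via_cancelling_contexts {Proc : Type*} [Preorder Proc]
    (R : Proc → Proc → Prop) (φ ψ : Proc → Proc)
    (hφ : Monotone φ) (hψ : Monotone ψ)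
    (h1 : ∀ A B, R A B → B ≤ φ A)
    (h2 : ∀ A B, R A B → A ≤ ψ B)
    (h3 : ∀ A B, R A B → φ (ψ B) ≤ B)
    (P Q P' Q' : Proc) (hPQ : R P Q) (hP'Q' : R P' Q') (hPP' : P ≤ P') :
    Q ≤ Q' := by
  calc Q ≤ φ P := h1 P Q hPQ
    _ ≤ φ (ψ Q') := hφ (hPP'.trans (h2 P' Q' hP'Q'))
    _ ≤ Q' := h3 P' Q' hP'Q'
end

section
/- Suppose there exist contexts φ and ψ such that for all (P,Q) ∈ R: Q ⪯ φ[P], P ⪯ ψ[Q], φ[ψ[Q]] ⪯ Q, and additionally ψ[φ[P]] ⪯ P. Then R is fully abstract: it satisfies both Preservation and Reflection. -/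
/-- Cancelling contexts in both directions yield full abstraction. -/
theorem full_abstraction_via_cancelling_contexts {Proc : Type*} [Preorder Proc]
    (R : Proc → Proc → Prop) (φ ψ : Proc → Proc)
    (hφ : Monotone φ) (hψ : Monotone ψ)
    (h1 : ∀ P Q, R P Q → Q ≤ φ P)
    (h2 : ∀ P Q, R P Q → P ≤ ψ Q)
    (h3 : ∀ P Q, R P Q → φ (ψ Q) ≤ Q)
    (h4 : ∀ P Q, R P Q → ψ (φ P) ≤ P) :
    (∀ P Q P' Q', R P Q → R P' Q' → P ≤ P' → Q ≤ Q') ∧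
    (∀ P Q P' Q', R P Q → R P' Q' → Q ≤ Q' → P ≤ P') := by
  constructor
  · intro P Q P' Q' h h' hPP'
    calc Q ≤ φ P := h1 _ _ h
      _ ≤ φ (ψ Q') := hφ (le_trans hPP' (h2 _ _ h'))
      _ ≤ Q' := h3 _ _ h'
  · intro P Q P' Q' h h' hQQ'
    calc P ≤ ψ Q := h2 _ _ h
      _ ≤ ψ (φ P') := hψ (le_trans hQQ' (h1 _ _ h'))
      _ ≤ P' := h4 _ _ h'
end
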